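/- Let q be a prime power and let f ∈ F_q[X₁, …, Xₙ]. Then f vanishes at every point of (F_q \ {0})^n if and only if f belongs to the ideal of F_q[X₁, …, Xₙ] generated by the polynomials X_j^{q−1} − 1 for j = 1, …, n. (In other words, the ideal generated by X₁^{q−1} − 1, …, Xₙ^{q−1} − 1 is the vanishing ideal of (F_q \ {0})^n.) -/

import Mathlib

open MvPolynomial

/-- A multivariate polynomial whose degree in each variable is less than `#S`
and which vanishes on `S^n` is the zero polynomial. -/
lemma aux_vanishing_zero {F : Type*} [Field F] (S : Finset F) :
    ∀ {n : ℕ} (f : MvPolynomial (Fin n) F),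
      (∀ i, f.degreeOf i < S.card) →
      (∀ x : Fin n → F, (∀ i, x i ∈ S) → MvPolynomial.eval x f = 0) → f = 0 := by
  intro n
  induction n with
  | zero =>
    intro f _ hv
    have h0 : MvPolynomial.eval (fun i : Fin 0 => (0 : F)) f = 0 := hv _ (fun i => i.elim0)
    rw [f.eq_C_of_isEmpty] at h0 ⊢
    simpa using h0
  | succ n ih =>
    intro f hdeg hv
    set g := MvPolynomial.finSuccEquiv F n f with hg
    have hcoeff : ∀ i : ℕ, g.coeff i = 0 := by
      intro i
      apply ih
      · intro j
        exact lt_of_le_of_lt (MvPolynomial.degreeOf_coeff_finSuccEquiv f j i)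
          (hdeg j.succ)
      · intro x hx
        have hmap : (g.map (MvPolynomial.eval x)) = 0 := by
          apply Polynomial.eq_zero_of_natDegree_lt_card_of_eval_eq_zero' _ S
          · intro y hy
            rw [← MvPolynomial.eval_eq_eval_mv_eval']
            exact hv _ (fun j => Fin.cases hy (fun k => hx k) j)
          · calc (g.map (MvPolynomial.eval x)).natDegree
                ≤ g.natDegree := Polynomial.natDegree_map_le
              _ = f.degreeOf 0 := MvPolynomial.natDegree_finSuccEquiv f
              _ < S.card := hdeg 0
        have := congrArg (fun p => Polynomial.coeff p i) hmap
        simpa [Polynomial.coeff_map] using this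
    have hg0 : g = 0 := Polynomial.ext fun i => by simp [hcoeff i]
    exact (map_eq_zero_iff _ (MvPolynomial.finSuccEquiv F n).injective).mp hg0

lemma aux_degreeOf_sum_lt {F : Type*} [CommSemiring F] {σ : Type*} {α : Type*}
    (s : Finset α) (g : α → MvPolynomial σ F) (j : σ) {d : ℕ} (hd : 0 < d)
    (h : ∀ a ∈ s, (g a).degreeOf j < d) : (∑ a ∈ s, g a).degreeOf j < d := by
  classical
  induction s using Finset.induction with
  | empty => simpa using hd
  | insert _ _ hx ihs =>
    rw [Finset.sum_insert hx]
    exact lt_of_le_of_lt (MvPolynomial.degreeOf_add_le _ _ _)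
      (max_lt (h _ (Finset.mem_insert_self _ _))
        (ihs fun a ha => h a (Finset.mem_insert_of_mem ha)))

/-- The ideal generated by the polynomials `X_j^{q-1} - 1` is the vanishing
ideal of `(F_q \ {0})^n`: a polynomial vanishes at every point with all
coordinates nonzero if and only if it lies in this ideal. -/
theorem mem_span_pow_card_sub_one_sub_one_iff_vanishing {F : Type*} [Field F]
    [Fintype F] {n : ℕ} (f : MvPolynomial (Fin n) F) :
    (∀ x : Fin n → F, (∀ i, x i ≠ 0) → MvPolynomial.eval x f = 0) ↔
      f ∈ Ideal.span
        (Set.range fun j : Fin n =>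
          MvPolynomial.X j ^ (Fintype.card F - 1) - 1) := by
  classical
  set q := Fintype.card F with hq
  have hq1 : 1 < q := Fintype.one_lt_card
  have hqpos : 0 < q - 1 := by omega
  set I : Ideal (MvPolynomial (Fin n) F) :=
    Ideal.span (Set.range fun j : Fin n => (MvPolynomial.X j : MvPolynomial (Fin n) F) ^ (q - 1) - 1) with hI
  -- elements of I vanish at points with nonzero coordinates
  have hvanish : ∀ g ∈ I, ∀ x : Fin n → F, (∀ i, x i ≠ 0) → MvPolynomial.eval x g = 0 := by
    intro g hgI x hx
    have hle : I ≤ RingHom.ker (MvPolynomial.eval x) := by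
      rw [hI, Ideal.span_le]
      rintro _ ⟨j, rfl⟩
      simp [RingHom.mem_ker, hq, FiniteField.pow_card_sub_one_eq_one _ (hx j)]
    exact hle hgI
  constructor
  · -- hard direction
    intro hv
    -- the reduction of f modulo I
    set r : MvPolynomial (Fin n) F :=
      ∑ m ∈ f.support, MvPolynomial.monomial
        (m.mapRange (· % (q - 1)) (Nat.zero_mod _)) (f.coeff m) with hr
    -- f ≡ r mod I
    have hfr : f - r ∈ I := by
      rw [← Ideal.Quotient.eq_zero_iff_mem, map_sub, sub_eq_zero]
      have hXpow : ∀ j : Fin n,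
          (Ideal.Quotient.mk I (MvPolynomial.X j)) ^ (q - 1) = 1 := by
        intro j
        have : Ideal.Quotient.mk I ((MvPolynomial.X j : MvPolynomial (Fin n) F) ^ (q - 1) - 1) = 0 :=
          Ideal.Quotient.eq_zero_iff_mem.mpr (Ideal.subset_span ⟨j, rfl⟩)
        rw [map_sub, map_pow, map_one, sub_eq_zero] at this
        exact this
      conv_lhs => rw [← f.support_sum_monomial_coeff]
      rw [hr, map_sum, map_sum]
      refine Finset.sum_congr rfl fun m _ => ?_
      rw [MvPolynomial.monomial_eq, MvPolynomial.monomial_eq, map_mul, map_mul]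
      congr 1
      rw [Finsupp.prod_fintype _ _ (fun i => pow_zero _),
        Finsupp.prod_fintype _ _ (fun i => pow_zero _), map_prod, map_prod]
      refine Finset.prod_congr rfl fun j _ => ?_
      rw [map_pow, map_pow, Finsupp.mapRange_apply]
      exact pow_eq_pow_mod _ (hXpow j)
    -- r vanishes at points with nonzero coordinates
    have hrv : ∀ x : Fin n → F, (∀ i, x i ≠ 0) → MvPolynomial.eval x r = 0 := by
      intro x hx
      have h1 := hvanish _ hfr x hx
      have h2 := hv x hx
      rw [map_sub, h2, zero_sub, neg_eq_zero] at h1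
      exact h1
    -- r has small degrees, hence r = 0
    have hS : (Finset.univ.erase (0 : F)).card = q - 1 := by
      rw [Finset.card_erase_of_mem (Finset.mem_univ _), Finset.card_univ, hq]
    have hr0 : r = 0 := by
      apply aux_vanishing_zero (Finset.univ.erase (0 : F))
      · intro j
        rw [hS, hr]
        apply aux_degreeOf_sum_lt _ _ _ hqpos
        intro m _
        apply lt_of_le_of_lt (MvPolynomial.degreeOf_le_iff.mpr ?_)
          (Nat.mod_lt (m j) hqpos)
        intro m' hm'
        rw [MvPolynomial.support_monomial] at hm'
        by_cases hc : f.coeff m = 0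
        · simp [hc] at hm'
        · simp only [hc, if_false, Finset.mem_singleton] at hm'
          simp [hm', Finsupp.mapRange_apply]
      · intro x hx
        exact hrv x fun i => (Finset.mem_erase.mp (hx i)).1
    have : f = f - r := by rw [hr0, sub_zero]
    rw [this]
    exact hfr
  · intro hf x hx
    exact hvanish f hf x hx
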